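/- If H₄ is a parity check matrix of a classical [n,k,d] code over F₄ (so ⟨H₄, a⟩ ≠ 0 for every nonzero a ∈ F₄ⁿ with wt₄(a) < d), then the binary matrix H = γ(H̃₄), with H̃₄ obtained by stacking ωH₄ over ω̄H₄, satisfies H ⊙ uᵀ ≠ 0 for every nonzero u ∈ (ℤ/2)^{2n} with symplectic weight wt(u) < d. -/

import Mathlib

open scoped Classical
open Finset

/-- The trace F₄ → F₂, Tr(x) = x + x², with values read in ℤ/2. -/
noncomputable def tr2 (x : GaloisField 2 2) : ZMod 2 := if x + x ^ 2 = 0 then 0 else 1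

/-- γ : F₄ → (ℤ/2)², γ(a) = (Tr(ωa), Tr(ω̄a)): 0 ↦ 00, ω̄ ↦ 01, 1 ↦ 11, ω ↦ 10. -/
noncomputable def gammaMap (ω : GaloisField 2 2) (a : GaloisField 2 2) : ZMod 2 × ZMod 2 :=
  (tr2 (ω * a), tr2 ((ω + 1) * a))

/-- Symplectic product of the binary image of the row `c • (H₄ r)` (c = ω or ω̄)
with u = (z|x) ∈ (ℤ/2)^{2n}: Σ_i z_i(row) x_i(u) + z_i(u) x_i(row). -/
noncomputable def rowSymp (ω : GaloisField 2 2) {m n : ℕ}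
    (H₄ : Matrix (Fin m) (Fin n) (GaloisField 2 2)) (c : GaloisField 2 2) (r : Fin m)
    (u : (Fin n → ZMod 2) × (Fin n → ZMod 2)) : ZMod 2 :=
  (∑ i, (gammaMap ω (c * H₄ r i)).1 * u.2 i) + (∑ i, u.1 i * (gammaMap ω (c * H₄ r i)).2)

section helpers

local notation "F" => GaloisField 2 2

lemma F_pow4 (x : F) : x ^ 4 = x := by
  letI : Fintype F := Fintype.ofFinite _
  have h := FiniteField.pow_card x
  have hc : Fintype.card F = 4 := by
    rw [← Nat.card_eq_fintype_card, GaloisField.card 2 2 (by norm_num)]; norm_num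
  rwa [hc] at h

lemma F_add_self (x : F) : x + x = 0 := CharTwo.add_self_eq_zero x

lemma F_add_sq (x y : F) : (x + y) ^ 2 = x ^ 2 + y ^ 2 := CharTwo.add_sq x y

lemma tr2_zero : tr2 0 = 0 := by simp [tr2]

lemma tr2_eq_zero_iff (x : F) : tr2 x = 0 ↔ x + x ^ 2 = 0 := by
  unfold tr2; split <;> simp_all

/-- x + x² is idempotent, hence 0 or 1. -/
lemma tr2_val (x : F) : x + x ^ 2 = 0 ∨ x + x ^ 2 = 1 := by
  have h : (x + x ^ 2) ^ 2 = x + x ^ 2 := by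
    rw [F_add_sq, ← pow_mul]
    norm_num [F_pow4 x, add_comm]
  have h2 : (x + x ^ 2) * ((x + x ^ 2) - 1) = 0 := by ring_nf; linear_combination h
  rcases mul_eq_zero.mp h2 with h3 | h3
  · exact Or.inl h3
  · exact Or.inr (by linear_combination h3)

lemma tr2_sq (x : F) : tr2 (x ^ 2) = tr2 x := by
  unfold tr2
  have : x ^ 2 + (x ^ 2) ^ 2 = x + x ^ 2 := by
    rw [← pow_mul]; norm_num [F_pow4 x, add_comm]
  rw [this]

lemma tr2_add (x y : F) : tr2 (x + y) = tr2 x + tr2 y := by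
  have hxy : (x + y) + (x + y) ^ 2 = (x + x ^ 2) + (y + y ^ 2) := by
    rw [F_add_sq]; ring
  have h1 : (1 : F) ≠ 0 := one_ne_zero
  unfold tr2
  rcases tr2_val x with hx | hx <;> rcases tr2_val y with hy | hy <;>
    rw [hxy, hx, hy] <;> simp [F_add_self (1 : F), h1] <;> decide

lemma tr2_sum {n : ℕ} (f : Fin n → F) : tr2 (∑ i, f i) = ∑ i, tr2 (f i) := by
  classical
  induction (univ : Finset (Fin n)) using Finset.induction with
  | empty => simp [tr2_zero]
  | insert _ _ h ih => simp [Finset.sum_insert h, tr2_add, ih]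

lemma zmod2_cases : ∀ z : ZMod 2, z = 0 ∨ z = 1 := by decide

lemma omega_sq1 (ω : F) (hω : ω ^ 2 = ω + 1) : (ω + 1) ^ 2 = ω := by
  rw [F_add_sq, hω, one_pow, add_assoc, F_add_self, add_zero]

lemma omega_ne (ω : F) (hω : ω ^ 2 = ω + 1) : ω ≠ 0 := by
  intro h; rw [h] at hω; simp at hω

lemma omega1_ne (ω : F) (hω : ω ^ 2 = ω + 1) : ω + 1 ≠ 0 := by
  intro h
  exact one_ne_zero (α := F) (by linear_combination hω - (ω - 2) * h)

/-- The inverse of γ on a pair of bits. -/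
noncomputable def aBit (ω : F) (z x : ZMod 2) : F :=
  (if z = 1 then ω else 0) + (if x = 1 then ω + 1 else 0)

lemma aBit_eq_zero (ω : F) (hω : ω ^ 2 = ω + 1) (z x : ZMod 2) :
    aBit ω z x = 0 ↔ z = 0 ∧ x = 0 := by
  have h1 : ω + (ω + 1) = 1 := by linear_combination F_add_self ω
  rcases zmod2_cases z with rfl | rfl <;> rcases zmod2_cases x with rfl | rfl <;>
    simp [aBit, omega_ne ω hω, omega1_ne ω hω, h1]

lemma point (ω : F) (hω : ω ^ 2 = ω + 1) (b : F) (z x : ZMod 2) :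
    tr2 (ω * b) * x + z * tr2 ((ω + 1) * b) = tr2 (b ^ 2 * aBit ω z x) := by
  rcases zmod2_cases z with rfl | rfl <;> rcases zmod2_cases x with rfl | rfl <;>
      simp [aBit]
  · simp [tr2_zero]
  · have h : b ^ 2 * (ω + 1) = (ω * b) ^ 2 := by rw [mul_pow, hω]; ring
    rw [h, tr2_sq]
  · have h : b ^ 2 * ω = ((ω + 1) * b) ^ 2 := by rw [mul_pow, omega_sq1 ω hω]; ring
    rw [h, tr2_sq]
  · have e1 : ω * b + (ω + 1) * b = b := by linear_combination b * F_add_self ω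
    have e2 : b ^ 2 * (ω + (ω + 1)) = b ^ 2 := by linear_combination b ^ 2 * F_add_self ω
    rw [← tr2_add, e1, e2, tr2_sq]

lemma rowSymp_eq (ω : F) (hω : ω ^ 2 = ω + 1) {m n : ℕ}
    (H₄ : Matrix (Fin m) (Fin n) F) (c : F) (r : Fin m)
    (u : (Fin n → ZMod 2) × (Fin n → ZMod 2)) :
    rowSymp ω H₄ c r u = tr2 (c ^ 2 * ∑ i, (H₄ r i) ^ 2 * aBit ω (u.1 i) (u.2 i)) := by
  unfold rowSymp gammaMap
  rw [← Finset.sum_add_distrib]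
  have h : ∀ i, tr2 (ω * (c * H₄ r i)) * u.2 i + u.1 i * tr2 ((ω + 1) * (c * H₄ r i))
      = tr2 ((c * H₄ r i) ^ 2 * aBit ω (u.1 i) (u.2 i)) := fun i =>
    point ω hω (c * H₄ r i) (u.1 i) (u.2 i)
  rw [Finset.sum_congr rfl fun i _ => h i, ← tr2_sum]
  congr 1
  rw [Finset.mul_sum]
  exact Finset.sum_congr rfl fun i _ => by ring

lemma nondeg (ω : F) (hω : ω ^ 2 = ω + 1) (S : F)
    (h1 : tr2 ((ω + 1) * S) = 0) (h2 : tr2 (ω * S) = 0) : S = 0 := by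
  have e2 : ω * S + (ω * S) ^ 2 = 0 := (tr2_eq_zero_iff _).mp h2
  have e1 : (ω + 1) * S + ((ω + 1) * S) ^ 2 = 0 := (tr2_eq_zero_iff _).mp h1
  rw [mul_pow, hω] at e2
  rw [mul_pow, omega_sq1 ω hω] at e1
  have eS : S * (1 + S) = 0 := by
    linear_combination e1 + e2 - S * F_add_self ω - S ^ 2 * F_add_self ω
  rcases mul_eq_zero.mp eS with h | h
  · exact h
  · exfalso
    have hS : S = 1 := by linear_combination h - F_add_self 1
    rw [hS] at e1
    exact one_ne_zero (α := F) (by linear_combination e1 - F_add_self ω)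

end helpers

/-- If H₄ is a parity check matrix detecting (via the Hermitian inner product
⟨x,y⟩ = Σ x_i² y_i) every nonzero a ∈ F₄ⁿ of weight < d, then the binary matrix
H = γ(H̃₄), with H̃₄ the stack of ωH₄ over ω̄H₄, satisfies H ⊙ uᵀ ≠ 0 for
every nonzero u ∈ (ℤ/2)^{2n} of symplectic weight < d. -/
theorem quaternary_to_symplectic_check (ω : GaloisField 2 2) (hω : ω ^ 2 = ω + 1)
    (m n d : ℕ) (H₄ : Matrix (Fin m) (Fin n) (GaloisField 2 2))
    (hcheck : ∀ a : Fin n → GaloisField 2 2, a ≠ 0 →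
      (univ.filter fun i => a i ≠ 0).card < d →
      ∃ r : Fin m, (∑ i, (H₄ r i) ^ 2 * a i) ≠ 0) :
    ∀ u : (Fin n → ZMod 2) × (Fin n → ZMod 2), u ≠ 0 →
      (univ.filter fun i => (u.1 i, u.2 i) ≠ ((0 : ZMod 2), (0 : ZMod 2))).card < d →
      ∃ r : Fin m, rowSymp ω H₄ ω r u ≠ 0 ∨ rowSymp ω H₄ (ω + 1) r u ≠ 0 := by
  intro u hu hw
  set a : Fin n → GaloisField 2 2 := fun i => aBit ω (u.1 i) (u.2 i) with ha
  have ha_ne : a ≠ 0 := by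
    intro h0
    apply hu
    ext i
    · have := congrFun h0 i
      exact ((aBit_eq_zero ω hω _ _).mp this).1
    · have := congrFun h0 i
      exact ((aBit_eq_zero ω hω _ _).mp this).2
  have hfilter : (univ.filter fun i => a i ≠ 0)
      = (univ.filter fun i => (u.1 i, u.2 i) ≠ ((0 : ZMod 2), (0 : ZMod 2))) := by
    apply Finset.filter_congr
    intro i _
    rw [ha]
    simp only [ne_eq, aBit_eq_zero ω hω, Prod.mk.injEq]
  obtain ⟨r, hS⟩ := hcheck a ha_ne (by rwa [hfilter])
  refine ⟨r, ?_⟩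
  by_contra hc
  push_neg at hc
  obtain ⟨h1, h2⟩ := hc
  rw [rowSymp_eq ω hω] at h1 h2
  rw [hω] at h1
  rw [omega_sq1 ω hω] at h2
  exact hS (nondeg ω hω _ h1 h2)
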